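/- Let X be a Banach lattice whose dual X* is w*-separable. Then X is IWCG if and only if X has a quasi-interior point, and X is BWCG if and only if X has a weak order unit. -/

import Mathlib

open Filter Topology Set

section Defs

variable {E : Type*} [NormedAddCommGroup E] [NormedSpace ℝ E]

/-- A set is weakly compact if it is compact in the weak topology. -/
def WeaklyCompact (K : Set E) : Prop := IsCompact (toWeakSpace ℝ E '' K)

/-- A set is weakly precompact if every sequence in it has a weakly Cauchy subsequence. -/
def WeaklyPrecompact (K : Set E) : Prop :=
  ∀ x : ℕ → E, (∀ n, x n ∈ K) → ∃ φ : ℕ → ℕ, StrictMono φ ∧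
    ∀ f : E →L[ℝ] ℝ, ∃ l : ℝ, Tendsto (fun n => f (x (φ n))) atTop (𝓝 l)

end Defs

section LatDefs

variable {E : Type*} [NormedAddCommGroup E] [Lattice E] [NormedSpace ℝ E]

/-- A closed sublattice: a closed linear subspace closed under `⊔` and `⊓`. -/
def IsClosedSublattice (S : Set E) : Prop :=
  IsClosed S ∧ (0 : E) ∈ S ∧ (∀ x ∈ S, ∀ y ∈ S, x + y ∈ S) ∧
    (∀ c : ℝ, ∀ x ∈ S, c • x ∈ S) ∧
    (∀ x ∈ S, ∀ y ∈ S, x ⊔ y ∈ S) ∧ (∀ x ∈ S, ∀ y ∈ S, x ⊓ y ∈ S)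

/-- `L(A)`: the smallest closed sublattice containing `A`. -/
def sublatticeGen (A : Set E) : Set E := ⋂₀ {S | IsClosedSublattice S ∧ A ⊆ S}

/-- The solid hull of a set. -/
def solidHull (A : Set E) : Set E := ⋃ x ∈ A, Set.Icc (-|x|) |x|

/-- A closed ideal: a closed linear subspace which is solid. -/
def IsClosedIdeal (S : Set E) : Prop :=
  IsClosed S ∧ (0 : E) ∈ S ∧ (∀ x ∈ S, ∀ y ∈ S, x + y ∈ S) ∧
    (∀ c : ℝ, ∀ x ∈ S, c • x ∈ S) ∧
    (∀ x : E, ∀ y ∈ S, |x| ≤ |y| → x ∈ S)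

/-- `I(A)`: the smallest closed ideal containing `A`. -/
def idealGen (A : Set E) : Set E := ⋂₀ {S | IsClosedIdeal S ∧ A ⊆ S}

/-- A band: a closed ideal closed under existing suprema. -/
def IsBand (S : Set E) : Prop :=
  IsClosedIdeal S ∧ ∀ D ⊆ S, ∀ x : E, IsLUB D x → x ∈ S

/-- `B(A)`: the smallest band containing `A`. -/
def bandGen (A : Set E) : Set E := ⋂₀ {S | IsBand S ∧ A ⊆ S}

/-- Disjoint complement of a set. -/
def disjComplement (A : Set E) : Set E := {x : E | ∀ y ∈ A, |x| ⊓ |y| = 0}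

end LatDefs

/-- Order continuity of the norm: every downward directed set with infimum `0`
has norms converging to `0` along the order. -/
def OrderContinuousBL (E : Type*) [NormedAddCommGroup E] [Lattice E] : Prop :=
  ∀ D : Set E, D.Nonempty → DirectedOn (· ≥ ·) D → IsGLB D 0 →
    ∀ ε > 0, ∃ d ∈ D, ∀ e ∈ D, e ≤ d → ‖e‖ < ε

/-- Density character of a topological space. -/
noncomputable def densChar (T : Type*) [TopologicalSpace T] : Cardinal :=
  sInf {c : Cardinal | ∃ s : Set T, Dense s ∧ Cardinal.mk s = c}


section AuxAlg
variable {X : Type*} [NormedAddCommGroup X] [Lattice X] [HasSolidNorm X] [IsOrderedAddMonoid X] [NormedSpace ℝ X]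

lemma aux_smul_nonneg {c : ℝ} (hc : 0 ≤ c) {y : X} (hy : 0 ≤ y) : 0 ≤ c • y := by
  have half : ∀ z : X, 0 ≤ z → 0 ≤ (2:ℝ)⁻¹ • z := by
    intro z hz
    refine nsmul_two_semiclosed ?_
    have h2 : (2 : ℕ) • ((2:ℝ)⁻¹ • z) = z := by
      rw [two_nsmul, ← add_smul]; norm_num
    rwa [h2]
  have dyadic : ∀ (k m : ℕ), 0 ≤ ((m : ℝ) / 2 ^ k) • y := by
    intro k
    induction k with
    | zero =>
      intro m
      simpa [Nat.cast_smul_eq_nsmul] using nsmul_nonneg hy m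
    | succ k ih =>
      intro m
      have h : ((m : ℝ) / 2 ^ (k+1)) • y = (2:ℝ)⁻¹ • (((m:ℝ)/2^k) • y) := by
        rw [smul_smul]; ring_nf
      rw [h]; exact half _ (ih m)
  set q : ℕ → ℝ := fun j => (⌈c * 2 ^ j⌉₊ : ℝ) / 2 ^ j with hq
  have hql : ∀ j, c ≤ q j := by
    intro j
    rw [hq, le_div_iff₀ (by positivity)]
    exact Nat.le_ceil _
  have hqu : ∀ j, q j ≤ c + ((2:ℝ)⁻¹) ^ j := by
    intro j
    rw [hq, div_le_iff₀ (by positivity)]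
    have := (Nat.ceil_lt_add_one (by positivity : (0:ℝ) ≤ c * 2 ^ j)).le
    calc (⌈c * 2 ^ j⌉₊ : ℝ) ≤ c * 2 ^ j + 1 := this
      _ = (c + ((2:ℝ)⁻¹) ^ j) * 2 ^ j := by
          rw [add_mul, ← mul_pow]; norm_num
  have hqt : Tendsto q atTop (𝓝 c) := by
    have hupper : Tendsto (fun j => c + ((2:ℝ)⁻¹) ^ j) atTop (𝓝 (c + 0)) :=
      tendsto_const_nhds.add (tendsto_pow_atTop_nhds_zero_of_lt_one (by norm_num) (by norm_num))
    rw [add_zero] at hupper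
    exact tendsto_of_tendsto_of_tendsto_of_le_of_le tendsto_const_nhds hupper hql hqu
  have hqs : Tendsto (fun j => q j • y) atTop (𝓝 (c • y)) := hqt.smul_const y
  have hcl : IsClosed {z : X | 0 ≤ z} := isClosed_le continuous_const continuous_id
  exact hcl.mem_of_tendsto hqs (Filter.Eventually.of_forall fun j => dyadic j _)

lemma aux_smul_le_smul {c : ℝ} (hc : 0 ≤ c) {a b : X} (h : a ≤ b) : c • a ≤ c • b := by
  have := aux_smul_nonneg hc (sub_nonneg.2 h)
  rw [smul_sub] at this
  exact sub_nonneg.1 this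

lemma aux_smul_le_abs (c : ℝ) (x : X) : c • x ≤ |c| • |x| := by
  rcases le_total 0 c with hc | hc
  · calc c • x ≤ c • |x| := aux_smul_le_smul hc (le_abs_self x)
      _ = |c| • |x| := by rw [abs_of_nonneg hc]
  · have h1 : c • x = (-c) • (-x) := by rw [neg_smul, smul_neg, neg_neg]
    rw [h1, abs_of_nonpos hc]
    exact aux_smul_le_smul (neg_nonneg.2 hc) (neg_le_abs x)

lemma aux_abs_smul_le (c : ℝ) (x : X) : |c • x| ≤ |c| • |x| := by
  rw [show |c • x| = (c • x) ⊔ (-(c • x)) from rfl]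
  refine sup_le (aux_smul_le_abs c x) ?_
  have : -(c • x) = (-c) • x := by rw [neg_smul]
  rw [this]
  simpa [abs_neg] using aux_smul_le_abs (-c) x

lemma aux_inf_add_le {a c e : X} (ha : 0 ≤ a) (hc : 0 ≤ c) (he : 0 ≤ e) :
    a ⊓ (c + e) ≤ a ⊓ c + a ⊓ e := by
  have key : a ⊓ c + a ⊓ e = ((a + a) ⊓ (c + a)) ⊓ ((a + e) ⊓ (c + e)) := by
    rw [add_inf a e (a ⊓ c), inf_add a c a, inf_add a c e]
  rw [key]
  refine le_inf (le_inf ?_ ?_) (le_inf ?_ ?_)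
  · exact inf_le_left.trans (le_add_of_nonneg_right ha)
  · exact inf_le_left.trans (le_add_of_nonneg_left hc)
  · exact inf_le_left.trans (le_add_of_nonneg_right he)
  · exact inf_le_right

lemma aux_inf_nsmul_le {a b : X} (ha : 0 ≤ a) (hb : 0 ≤ b) (n : ℕ) :
    a ⊓ (n • b) ≤ n • (a ⊓ b) := by
  induction n with
  | zero => simpa using inf_le_right
  | succ n ih =>
    rw [succ_nsmul, succ_nsmul]
    calc a ⊓ (n • b + b) ≤ a ⊓ (n • b) + a ⊓ b := aux_inf_add_le ha (nsmul_nonneg hb n) hb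
      _ ≤ n • (a ⊓ b) + a ⊓ b := add_le_add_left ih _

lemma aux_disjoint_of_le {a b t : X} (ha : 0 ≤ a) (hb : 0 ≤ b) (hab : a ⊓ b = 0)
    (ht0 : 0 ≤ t) {n : ℕ} (htn : t ≤ n • b) : a ⊓ t = 0 := by
  refine le_antisymm ?_ (le_inf ha ht0)
  calc a ⊓ t ≤ a ⊓ (n • b) := inf_le_inf_left a htn
    _ ≤ n • (a ⊓ b) := aux_inf_nsmul_le ha hb n
    _ = 0 := by rw [hab, smul_zero]

lemma aux_eq_zero_of_nsmul_le {v y : X} (hv : 0 ≤ v) (h : ∀ n : ℕ, n • v ≤ y) : v = 0 := by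
  have hy : 0 ≤ y := by simpa using h 0
  have hnorm : ∀ n : ℕ, (n : ℝ) * ‖v‖ ≤ ‖y‖ := by
    intro n
    have h1 : |n • v| ≤ |y| := by
      rw [abs_of_nonneg (nsmul_nonneg hv n), abs_of_nonneg hy]
      exact h n
    have h2 := norm_le_norm_of_abs_le_abs h1
    rwa [← Nat.cast_smul_eq_nsmul ℝ, norm_smul, Real.norm_natCast] at h2
  by_contra hne
  have hvpos : 0 < ‖v‖ := norm_pos_iff.2 hne
  obtain ⟨n, hn⟩ := exists_nat_gt (‖y‖ / ‖v‖)
  have h3 : ‖y‖ < n * ‖v‖ := (div_lt_iff₀ hvpos).1 hn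
  exact absurd (hnorm n) (not_le.2 h3)

end AuxAlg


section AuxIdeal
variable {X : Type*} [NormedAddCommGroup X] [Lattice X] [HasSolidNorm X] [IsOrderedAddMonoid X] [NormedSpace ℝ X]

lemma aux_isClosedIdeal_univ : IsClosedIdeal (univ : Set X) := by
  refine ⟨isClosed_univ, trivial, ?_, ?_, ?_⟩ <;> intros <;> trivial

lemma aux_isBand_univ : IsBand (univ : Set X) := by
  refine ⟨aux_isClosedIdeal_univ, ?_⟩; intros; trivial

lemma aux_idealGen_isClosedIdeal (A : Set X) : IsClosedIdeal (idealGen A) := by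
  refine ⟨?_, ?_, ?_, ?_, ?_⟩
  · exact isClosed_sInter fun S hS => hS.1.1
  · exact fun S hS => hS.1.2.1
  · intro x hx y hy S hS
    exact hS.1.2.2.1 x (hx S hS) y (hy S hS)
  · intro c x hx S hS
    exact hS.1.2.2.2.1 c x (hx S hS)
  · intro x y hy hxy S hS
    exact hS.1.2.2.2.2 x y (hy S hS) hxy

lemma aux_subset_idealGen (A : Set X) : A ⊆ idealGen A := by
  intro a ha S hS; exact hS.2 ha

lemma aux_idealGen_subset {A S : Set X} (hS : IsClosedIdeal S) (h : A ⊆ S) :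
    idealGen A ⊆ S := sInter_subset_of_mem ⟨hS, h⟩

lemma aux_bandGen_isBand (A : Set X) : IsBand (bandGen A) := by
  constructor
  · refine ⟨?_, ?_, ?_, ?_, ?_⟩
    · exact isClosed_sInter fun S hS => hS.1.1.1
    · exact fun S hS => hS.1.1.2.1
    · intro x hx y hy S hS
      exact hS.1.1.2.2.1 x (hx S hS) y (hy S hS)
    · intro c x hx S hS
      exact hS.1.1.2.2.2.1 c x (hx S hS)
    · intro x y hy hxy S hS
      exact hS.1.1.2.2.2.2 x y (hy S hS) hxy
  · intro D hD x hx S hS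
    exact hS.1.2 D (fun d hd => hD hd S hS) x hx

lemma aux_subset_bandGen (A : Set X) : A ⊆ bandGen A := by
  intro a ha S hS; exact hS.2 ha

lemma aux_bandGen_subset {A S : Set X} (hS : IsBand S) (h : A ⊆ S) :
    bandGen A ⊆ S := sInter_subset_of_mem ⟨hS, h⟩

lemma aux_mem_disjComplement {A : Set X} {x : X} :
    x ∈ disjComplement A ↔ ∀ y ∈ A, |x| ⊓ |y| = 0 := Iff.rfl

lemma aux_nsmul_mem {S : Set X} (h0 : (0:X) ∈ S)
    (hadd : ∀ x ∈ S, ∀ y ∈ S, x + y ∈ S) {x : X} (hx : x ∈ S) (n : ℕ) : n • x ∈ S := by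
  induction n with
  | zero => simpa using h0
  | succ n ih => rw [succ_nsmul]; exact hadd _ ih _ hx

lemma aux_isBand_disjComplement (A : Set X) : IsBand (disjComplement A) := by
  constructor
  · refine ⟨?_, ?_, ?_, ?_, ?_⟩
    · have : disjComplement A = ⋂ y ∈ A, {x : X | |x| ⊓ |y| = 0} := by
        ext x; simp [disjComplement]
      rw [this]
      refine isClosed_biInter fun y _ => ?_
      have hc : Continuous fun x : X => |x| ⊓ |y| := by
        have habs : Continuous fun x : X => |x| :=
          continuous_id.sup continuous_neg
        exact habs.inf continuous_const
      exact isClosed_eq hc continuous_const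
    · intro y hy
      simp [inf_eq_left.2 (abs_nonneg y)]
    · intro x hx z hz y hy
      refine le_antisymm ?_ (le_inf (abs_nonneg _) (abs_nonneg _))
      calc |x + z| ⊓ |y| ≤ (|x| + |z|) ⊓ |y| := inf_le_inf_right _ (abs_add_le x z)
        _ = |y| ⊓ (|x| + |z|) := inf_comm _ _
        _ ≤ |y| ⊓ |x| + |y| ⊓ |z| := aux_inf_add_le (abs_nonneg y) (abs_nonneg x) (abs_nonneg z)
        _ = 0 := by rw [inf_comm, hx y hy, inf_comm, hz y hy, add_zero]
    · intro c x hx y hy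
      have h1 : |c • x| ≤ ⌈|c|⌉₊ • |x| := by
        refine (aux_abs_smul_le c x).trans ?_
        rw [← Nat.cast_smul_eq_nsmul ℝ]
        have := aux_smul_nonneg (sub_nonneg.2 (Nat.le_ceil |c|)) (abs_nonneg x)
        rw [sub_smul] at this
        exact sub_nonneg.1 this
      refine le_antisymm ?_ (le_inf (abs_nonneg _) (abs_nonneg _))
      have := aux_disjoint_of_le (abs_nonneg y) (abs_nonneg x)
        (by rw [inf_comm]; exact hx y hy) (abs_nonneg (c • x)) h1
      rw [inf_comm]
      exact this.le
    · intro x z hz hxz y hy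
      refine le_antisymm ?_ (le_inf (abs_nonneg _) (abs_nonneg _))
      calc |x| ⊓ |y| ≤ |z| ⊓ |y| := inf_le_inf_right _ hxz
        _ = 0 := hz y hy
  · intro D hD x hx y hy
    rcases D.eq_empty_or_nonempty with rfl | ⟨d0, hd0⟩
    · have hall : ∀ v : X, 0 ≤ v := by
        intro v
        have := hx.2 (by simp [upperBounds] : x + v ∈ upperBounds (∅ : Set X))
        exact (le_add_iff_nonneg_right x).1 this
      have hx0 : x = 0 := le_antisymm (neg_nonneg.1 (hall (-x))) (hall x)
      simp [hx0, inf_eq_left.2 (abs_nonneg y)]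
    · set a := |y| with ha
      set b := |x| ⊓ a with hb
      have hb0 : 0 ≤ b := le_inf (abs_nonneg x) (abs_nonneg y)
      have hub : x - b ∈ upperBounds D := by
        intro d hd
        have hdx : d ≤ x := hx.1 hd
        have hdisj : b ⊓ |d| = 0 := by
          refine le_antisymm ?_ (le_inf hb0 (abs_nonneg d))
          calc b ⊓ |d| ≤ a ⊓ |d| := inf_le_inf_right _ inf_le_right
            _ = |d| ⊓ a := inf_comm _ _
            _ = 0 := hD hd y hy
        have hble : b ≤ |d| + (x - d) := by
          have h1 : |x| - |d| ≤ |x - d| := (le_abs_self _).trans (abs_abs_sub_abs_le x d)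
          have h2 : |x - d| = x - d := abs_of_nonneg (sub_nonneg.2 hdx)
          have h3 : |x| ≤ |d| + (x - d) := by
            rw [← h2]; exact sub_le_iff_le_add'.1 h1
          exact inf_le_left.trans h3
        have hkey : b ≤ x - d := by
          have h4 : b = b ⊓ (|d| + (x - d)) := (inf_eq_left.2 hble).symm
          calc b = b ⊓ (|d| + (x - d)) := h4
            _ ≤ b ⊓ |d| + b ⊓ (x - d) :=
                aux_inf_add_le hb0 (abs_nonneg d) (sub_nonneg.2 hdx)
            _ = b ⊓ (x - d) := by rw [hdisj, zero_add]
            _ ≤ x - d := inf_le_right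
        exact le_sub_comm.1 hkey
      have hxle : x ≤ x - b := hx.2 hub
      have hble0 : b ≤ 0 := by
        have := sub_le_sub_left hxle x
        simpa using (le_sub_comm.1 hxle)
      have hbz : b = 0 := le_antisymm hble0 hb0
      exact hbz

lemma aux_isClosedIdeal_convex {S : Set X} (hS : IsClosedIdeal S) : Convex ℝ S := by
  intro x hx y hy p q hp hq hpq
  exact hS.2.2.1 _ (hS.2.2.2.1 p x hx) _ (hS.2.2.2.1 q y hy)

lemma aux_mem_of_weakClosure {S : Set X} (hcl : IsClosed S) (hconv : Convex ℝ S)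
    {D : Set X} (hD : D ⊆ S) {x : X}
    (hx : toWeakSpace ℝ X x ∈ closure (toWeakSpace ℝ X '' D)) : x ∈ S := by
  have h1 : closure (toWeakSpace ℝ X '' D) ⊆ closure (toWeakSpace ℝ X '' S) :=
    closure_mono (image_mono hD)
  have h2 : closure (toWeakSpace ℝ X '' S) = toWeakSpace ℝ X '' S := by
    rw [← hconv.toWeakSpace_closure ℝ, hcl.closure_eq]
  obtain ⟨z, hzS, hzx⟩ := h2 ▸ h1 hx
  rwa [← (toWeakSpace ℝ X).injective hzx]

end AuxIdeal


section AuxSep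
variable {X : Type*} [NormedAddCommGroup X] [Lattice X] [HasSolidNorm X] [IsOrderedAddMonoid X] [NormedSpace ℝ X]

lemma aux_exists_countable_weakDense
    (hsep : TopologicalSpace.SeparableSpace (WeakDual ℝ X)) {K : Set X}
    (hK : IsCompact (toWeakSpace ℝ X '' K)) :
    ∃ D : Set X, D.Countable ∧ D ⊆ K ∧
      toWeakSpace ℝ X '' K ⊆ closure (toWeakSpace ℝ X '' D) := by
  obtain ⟨S, Scnt, Sdense⟩ := hsep.exists_countable_dense
  have hSne : S.Nonempty := Sdense.nonempty
  obtain ⟨f, hf⟩ := Scnt.exists_eq_range hSne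
  have hsepp : ∀ x : X, x ≠ 0 → ∃ n, f n x ≠ 0 := by
    intro x hx
    obtain ⟨g, -, hg2⟩ := exists_dual_vector ℝ x (norm_ne_zero_iff.2 hx)
    have hUopen : IsOpen {h : WeakDual ℝ X | h x ≠ 0} :=
      isOpen_compl_singleton.preimage (WeakDual.eval_continuous x)
    have hUne : ({h : WeakDual ℝ X | h x ≠ 0}).Nonempty := by
      refine ⟨(g : WeakDual ℝ X), ?_⟩
      show g x ≠ 0
      rw [hg2]
      exact_mod_cast norm_ne_zero_iff.2 hx
    obtain ⟨h, hhS, hhU⟩ := Sdense.exists_mem_open hUopen hUne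
    rw [hf] at hhS
    obtain ⟨n, rfl⟩ := hhS
    exact ⟨n, hhU⟩
  set e := toWeakSpace ℝ X with he
  set Φ : WeakSpace ℝ X → ℕ → ℝ := fun z n => f n (e.symm z) with hΦ
  have hΦcont : Continuous Φ := by
    refine continuous_pi fun n => ?_
    exact WeakBilin.eval_continuous ((topDualPairing ℝ X).flip) (f n : X →L[ℝ] ℝ)
  have hΦinj : Function.Injective Φ := by
    intro a b hab
    by_contra hne
    have hne' : e.symm a - e.symm b ≠ 0 := by
      intro h0
      exact hne (by simpa using congrArg e (sub_eq_zero.1 h0))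
    obtain ⟨n, hn⟩ := hsepp _ hne'
    have := congrFun hab n
    rw [hΦ] at this
    simp only [map_sub] at hn
    exact hn (by simpa [sub_eq_zero] using this)
  set K'' := e '' K with hK''
  set T := Φ '' K'' with hT
  have hTcomp : IsCompact T := hK.image hΦcont
  obtain ⟨Csub, hCcnt, hCdense⟩ := TopologicalSpace.exists_countable_dense ↥T
  set Cset : Set (ℕ → ℝ) := (↑) '' Csub with hCset
  have hCsetT : Cset ⊆ T := by rintro - ⟨c, -, rfl⟩; exact c.2
  have hCsetcnt : Cset.Countable := hCcnt.image _
  set D'' := K'' ∩ Φ ⁻¹' Cset with hD''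
  have hD''cnt : D''.Countable :=
    ((hCsetcnt.preimage hΦinj).mono inter_subset_right : D''.Countable)
  have hdense : K'' ⊆ closure D'' := by
    intro y hy
    have hΦy : Φ y ∈ T := mem_image_of_mem _ hy
    have h1 : Φ y ∈ closure Cset := by
      have h2 : (⟨Φ y, hΦy⟩ : ↥T) ∈ closure Csub := by
        rw [hCdense.closure_eq]; trivial
      exact closure_subtype.1 h2
    have hF : IsCompact (K'' ∩ closure D'') := hK.inter_right isClosed_closure
    have hΦF : IsClosed (Φ '' (K'' ∩ closure D'')) := (hF.image hΦcont).isClosed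
    have hsub : Cset ⊆ Φ '' (K'' ∩ closure D'') := by
      intro c hc
      obtain ⟨z, hzK, rfl⟩ := hCsetT hc
      exact ⟨z, ⟨hzK, subset_closure ⟨hzK, hc⟩⟩, rfl⟩
    have h2 : Φ y ∈ Φ '' (K'' ∩ closure D'') := closure_minimal hsub hΦF h1
    obtain ⟨z, ⟨-, hzcl⟩, hzy⟩ := h2
    rwa [← hΦinj hzy]
  refine ⟨e.symm '' D'', hD''cnt.image _, ?_, ?_⟩
  · rintro - ⟨z, ⟨hzK, -⟩, rfl⟩
    obtain ⟨w, hwK, rfl⟩ := hzK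
    simpa using hwK
  · have himg : e '' (e.symm '' D'') = D'' := by
      rw [Set.image_image]
      simp
    rw [himg]
    exact hdense

end AuxSep


section AuxU
variable {X : Type*} [NormedAddCommGroup X] [Lattice X] [HasSolidNorm X] [IsOrderedAddMonoid X] [NormedSpace ℝ X]

lemma aux_isLUB_inf_nsmul {u y : X} (hu : 0 ≤ u) (hy : 0 ≤ y)
    (hunit : {x : X | ∀ z ∈ ({u} : Set X), |x| ⊓ |z| = 0} = {0}) :
    IsLUB {t : X | ∃ n : ℕ, t = y ⊓ n • u} y := by
  constructor
  · rintro - ⟨n, rfl⟩; exact inf_le_left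
  · intro z hz
    have hz' : ∀ n : ℕ, y ⊓ n • u ≤ y ⊓ z := fun n =>
      le_inf inf_le_left (hz ⟨n, rfl⟩)
    set w := y - y ⊓ z with hwdef
    have hw : 0 ≤ w := sub_nonneg.2 inf_le_left
    set v := w ⊓ u with hvdef
    have hv0 : 0 ≤ v := le_inf hw hu
    have hvu : v ≤ u := inf_le_right
    have key : ∀ n : ℕ, n • v ≤ y ⊓ (n • u) := by
      intro n
      induction n with
      | zero => simp [inf_eq_right.2 hy]
      | succ n ih =>
        have h1 : v ≤ y - y ⊓ (n • u) := by
          have h2 : y - (y ⊓ z) ≤ y - y ⊓ (n • u) := sub_le_sub_left (hz' n) y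
          exact inf_le_left.trans h2
        have h2 : (n + 1) • v ≤ y := by
          rw [succ_nsmul]
          calc n • v + v ≤ y ⊓ (n • u) + (y - y ⊓ (n • u)) := add_le_add ih h1
            _ = y := by rw [add_sub_cancel]
        have h3 : (n + 1) • v ≤ (n + 1) • u := by
          rw [succ_nsmul, succ_nsmul]
          exact add_le_add (by
            calc n • v ≤ y ⊓ (n • u) := ih
              _ ≤ n • u := inf_le_right) hvu
        exact le_inf h2 h3
    have hvy : ∀ n : ℕ, n • v ≤ y := fun n => (key n).trans inf_le_left
    have hv : v = 0 := aux_eq_zero_of_nsmul_le hv0 hvy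
    have hwmem : w ∈ {x : X | ∀ z ∈ ({u} : Set X), |x| ⊓ |z| = 0} := by
      intro t ht
      rw [mem_singleton_iff] at ht; subst ht
      rw [abs_of_nonneg hw, abs_of_nonneg hu]
      exact hv
    rw [hunit, mem_singleton_iff] at hwmem
    have hyz : y = y ⊓ z := by
      have := sub_eq_zero.1 hwmem
      exact this
    exact hyz.le.trans inf_le_right

variable [CompleteSpace X]

lemma aux_exists_u (hsep : TopologicalSpace.SeparableSpace (WeakDual ℝ X)) {K : Set X}
    (hK : IsCompact (toWeakSpace ℝ X '' K)) :
    ∃ (u : X) (x : ℕ → X) (c : ℕ → ℝ),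
      0 ≤ u ∧ (∀ n, 0 < c n) ∧ (∀ n, c n • |x n| ≤ u) ∧
      toWeakSpace ℝ X '' K ⊆ closure (toWeakSpace ℝ X '' (Set.range x)) := by
  obtain ⟨D, hDcnt, hDK, hDdense⟩ := aux_exists_countable_weakDense hsep hK
  obtain ⟨x, hx⟩ := (hDcnt.insert 0).exists_eq_range (insert_nonempty _ _)
  set c : ℕ → ℝ := fun n => ((2:ℝ)^n * (1 + ‖x n‖))⁻¹ with hc
  have hcpos : ∀ n, 0 < c n := fun n => by positivity
  have hterm_nonneg : ∀ n, 0 ≤ c n • |x n| := fun n =>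
    aux_smul_nonneg (hcpos n).le (abs_nonneg _)
  have hbound : ∀ n, ‖c n • |x n|‖ ≤ (1/2:ℝ)^n := by
    intro n
    rw [norm_smul, Real.norm_eq_abs, abs_of_pos (hcpos n), norm_abs_eq_norm]
    have ht : (0:ℝ) ≤ ‖x n‖ := norm_nonneg _
    have heq : c n * ‖x n‖ = ((2:ℝ)^n)⁻¹ * (‖x n‖ / (1 + ‖x n‖)) := by
      rw [hc]
      field_simp
    rw [heq, one_div, inv_pow]
    have h1 : ‖x n‖ / (1 + ‖x n‖) ≤ 1 := by
      rw [div_le_one (by positivity)]; linarith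
    calc ((2:ℝ)^n)⁻¹ * (‖x n‖ / (1 + ‖x n‖)) ≤ ((2:ℝ)^n)⁻¹ * 1 := by
          exact mul_le_mul_of_nonneg_left h1 (by positivity)
      _ = ((2:ℝ)^n)⁻¹ := mul_one _
  have hsum : Summable (fun n => c n • |x n|) :=
    Summable.of_norm_bounded summable_geometric_two hbound
  refine ⟨∑' n, c n • |x n|, x, c, tsum_nonneg hterm_nonneg, hcpos,
    fun n => Summable.le_tsum hsum n (fun m _ => hterm_nonneg m), ?_⟩
  refine hDdense.trans (closure_mono (image_mono ?_))
  intro d hd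
  rw [← hx]
  exact subset_insert _ _ hd

end AuxU

/-- if X* is w*-separable, then X is IWCG iff X has a quasi-interior
point, and X is BWCG iff X has a weak order unit. -/
theorem IWCG_BWCG_iff_of_wstar_separable_dual
    {X : Type*} [NormedAddCommGroup X] [Lattice X] [HasSolidNorm X] [IsOrderedAddMonoid X] [NormedSpace ℝ X] [CompleteSpace X]
    (hsep : TopologicalSpace.SeparableSpace (WeakDual ℝ X)) :
    ((∃ K : Set X, WeaklyCompact K ∧ idealGen K = Set.univ) ↔
      (∃ u : X, 0 ≤ u ∧ idealGen ({u} : Set X) = Set.univ)) ∧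
    ((∃ K : Set X, WeaklyCompact K ∧ bandGen K = Set.univ) ↔
      (∃ u : X, 0 ≤ u ∧ disjComplement ({u} : Set X) = {0})) := by
  constructor
  · constructor
    · rintro ⟨K, hK, hKgen⟩
      obtain ⟨u, x, c, hu, hcpos, hterm, hdense⟩ := aux_exists_u hsep hK
      refine ⟨u, hu, ?_⟩
      have hIideal := aux_idealGen_isClosedIdeal ({u} : Set X)
      have huI : u ∈ idealGen ({u} : Set X) := aux_subset_idealGen _ rfl
      have hxI : ∀ n, x n ∈ idealGen ({u} : Set X) := by
        intro n
        have hy : (c n)⁻¹ • u ∈ idealGen ({u} : Set X) := hIideal.2.2.2.1 _ _ huI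
        refine hIideal.2.2.2.2 (x n) _ hy ?_
        have hy0 : 0 ≤ (c n)⁻¹ • u := aux_smul_nonneg (inv_nonneg.2 (hcpos n).le) hu
        rw [abs_of_nonneg hy0]
        have h1 : |x n| = (c n)⁻¹ • (c n • |x n|) := by
          rw [smul_smul, inv_mul_cancel₀ (hcpos n).ne', one_smul]
        rw [h1]
        exact aux_smul_le_smul (inv_nonneg.2 (hcpos n).le) (hterm n)
      have hKI : K ⊆ idealGen ({u} : Set X) := fun k hk =>
        aux_mem_of_weakClosure hIideal.1 (aux_isClosedIdeal_convex hIideal)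
          (range_subset_iff.2 hxI) (hdense (mem_image_of_mem _ hk))
      exact eq_univ_of_univ_subset (hKgen ▸ aux_idealGen_subset hIideal hKI)
    · rintro ⟨u, hu, hgen⟩
      refine ⟨{u}, ?_, hgen⟩
      rw [WeaklyCompact, image_singleton]
      exact isCompact_singleton
  · constructor
    · rintro ⟨K, hK, hKgen⟩
      obtain ⟨u, x, c, hu, hcpos, hterm, hdense⟩ := aux_exists_u hsep hK
      refine ⟨u, hu, ?_⟩
      apply Subset.antisymm
      · intro w hw
        have hwu : |w| ⊓ u = 0 := by
          have := hw u rfl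
          rwa [abs_of_nonneg hu] at this
        have hBband := aux_isBand_disjComplement ({w} : Set X)
        have hxB : ∀ n, x n ∈ disjComplement ({w} : Set X) := by
          intro n y hy
          rw [mem_singleton_iff] at hy
          rw [hy]
          have h1 : |w| ⊓ (c n • |x n|) = 0 := by
            refine le_antisymm ?_
              (le_inf (abs_nonneg w) (aux_smul_nonneg (hcpos n).le (abs_nonneg _)))
            calc |w| ⊓ (c n • |x n|) ≤ |w| ⊓ u := inf_le_inf_left _ (hterm n)
              _ = 0 := hwu
          have h2 : |x n| ≤ ⌈(c n)⁻¹⌉₊ • (c n • |x n|) := by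
            have h3 : |x n| = (c n)⁻¹ • (c n • |x n|) := by
              rw [smul_smul, inv_mul_cancel₀ (hcpos n).ne', one_smul]
            have h4 : (c n)⁻¹ • (c n • |x n|) ≤ (⌈(c n)⁻¹⌉₊ : ℝ) • (c n • |x n|) := by
              have h5 := aux_smul_nonneg (sub_nonneg.2 (Nat.le_ceil (c n)⁻¹))
                (aux_smul_nonneg (hcpos n).le (abs_nonneg (x n)))
              rw [sub_smul] at h5
              exact sub_nonneg.1 h5
            rw [Nat.cast_smul_eq_nsmul] at h4
            exact le_trans (le_of_eq h3) h4
          rw [inf_comm]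
          exact aux_disjoint_of_le (abs_nonneg w)
            (aux_smul_nonneg (hcpos n).le (abs_nonneg _)) h1 (abs_nonneg _) h2
        have hKB : K ⊆ disjComplement ({w} : Set X) := fun k hk =>
          aux_mem_of_weakClosure hBband.1.1 (aux_isClosedIdeal_convex hBband.1)
            (range_subset_iff.2 hxB) (hdense (mem_image_of_mem _ hk))
        have hBuniv : disjComplement ({w} : Set X) = univ :=
          eq_univ_of_univ_subset (hKgen ▸ aux_bandGen_subset hBband hKB)
        have hwB : w ∈ disjComplement ({w} : Set X) := hBuniv ▸ mem_univ w
        have h5 : |w| ⊓ |w| = 0 := hwB w rfl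
        have h6 : w = 0 := by
          have h7 : |w| = 0 := by simpa using h5
          have hw1 : w ≤ 0 := h7 ▸ le_abs_self w
          have hw2 : (0:X) ≤ w := neg_nonpos.1 (h7 ▸ neg_le_abs w)
          exact le_antisymm hw1 hw2
        exact h6
      · intro z hz
        rw [mem_singleton_iff] at hz; subst hz
        intro y hy
        simp [inf_eq_left.2 (abs_nonneg y)]
    · rintro ⟨u, hu, hunit⟩
      refine ⟨{u}, ?_, ?_⟩
      · rw [WeaklyCompact, image_singleton]
        exact isCompact_singleton
      · refine eq_univ_of_forall fun z => ?_
        intro S hS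
        obtain ⟨hSband, huS⟩ := hS
        have hpos : ∀ v : X, 0 ≤ v → v ∈ S := by
          intro v hv
          have hset : {t : X | ∃ n : ℕ, t = v ⊓ n • u} ⊆ S := by
            rintro - ⟨n, rfl⟩
            have hnu : n • u ∈ S :=
              aux_nsmul_mem hSband.1.2.1 hSband.1.2.2.1 (huS rfl) n
            refine hSband.1.2.2.2.2 _ _ hnu ?_
            rw [abs_of_nonneg (le_inf hv (nsmul_nonneg hu n)),
              abs_of_nonneg (nsmul_nonneg hu n)]
            exact inf_le_right
          exact hSband.2 _ hset v (aux_isLUB_inf_nsmul hu hv hunit)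
        have h1 : z⁺ ∈ S := hpos _ (posPart_nonneg z)
        have h2 : z⁻ ∈ S := hpos _ (negPart_nonneg z)
        have h3 : -z⁻ ∈ S := by
          have := hSband.1.2.2.2.1 (-1) _ h2
          rwa [neg_one_smul] at this
        have h4 := hSband.1.2.2.1 _ h1 _ h3
        rwa [← sub_eq_add_neg, posPart_sub_negPart] at h4
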